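/- For every integer k ≥ 1, let g_k = p^A(k+1|k / 2k+1), a Frobenius type-A seaweed. If k = 1, the spectrum of g_k is {−1, 0 with multiplicity 2, 1 with multiplicity 2, 2}. If k > 1, the spectrum of g_k is {−k, 0 with multiplicity 3k−1, 1 with multiplicity 3k−1, k+1} ∪ ⋃_{i=1}^{k−1} { (−k+i) with multiplicity 3i, (k−i+1) with multiplicity 3i }. Moreover, g_k has the log-concave spectrum property. -/

import Mathlib

namespace Seaweed

/-- Positions `i` and `j` (1-indexed) are joined by an arc of the composition `c`:
they lie in the same block of `c` and are placed symmetrically within it. -/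
def blockPair (c : List ℕ) (i j : ℕ) : Prop :=
  ∃ k, k < c.length ∧ (c.take k).sum < i ∧ (c.take k).sum < j ∧
    i + j = 2 * (c.take k).sum + c.getD k 0 + 1 ∧ i ≠ j

lemma blockPair_symm {c : List ℕ} {i j : ℕ} (h : blockPair c i j) : blockPair c j i := by
  obtain ⟨k, hk, hi, hj, hsum, hne⟩ := h
  exact ⟨k, hk, hj, hi, by omega, hne.symm⟩

/-- The meander `M(a|b)` of the pair of compositions `(a, b)`, as a simple graph on `ℕ`
(positions `1, …, a.sum` carry the meander; all other naturals are isolated).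
Top edges come from `a`, bottom edges from `b`. -/
def meander (a b : List ℕ) : SimpleGraph ℕ where
  Adj i j := blockPair a i j ∨ blockPair b i j
  symm := ⟨fun _ _ h => h.imp blockPair_symm blockPair_symm⟩
  loopless := ⟨by
    rintro i (⟨k, _, _, _, _, hne⟩ | ⟨k, _, _, _, _, hne⟩) <;> exact hne rfl⟩

/-- The directed-edge relation of the oriented meander: top edges are oriented
right-to-left, bottom edges left-to-right. -/
def dirEdge (a b : List ℕ) (x y : ℕ) : Prop :=
  (blockPair a x y ∧ y < x) ∨ (blockPair b x y ∧ x < y)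

open scoped Classical in
/-- The weight of a walk in the oriented meander: each step taken in agreement with
the orientation counts `+1`, each step against it counts `-1`. -/
noncomputable def walkWeight (a b : List ℕ) {i j : ℕ} (w : (meander a b).Walk i j) : ℤ :=
  (w.darts.map fun d => if dirEdge a b d.toProd.1 d.toProd.2 then (1 : ℤ) else -1).sum

open scoped Classical in
/-- `w(P_{i,j}(a|b))`: the weight of the (unique, when the meander consists of a single
path) path from `v_i` to `v_j` in the oriented meander. -/
noncomputable def pathWeight (a b : List ℕ) (i j : ℕ) : ℤ :=
  if h : ∃ p : (meander a b).Walk i j, p.IsPath then walkWeight a b h.choose else 0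

/-- The meander of `(a, b)` consists of a single path: it has no cycles (in particular no
doubled top/bottom edge, which would be a 2-cycle) and all positions `1, …, n` are
connected.  This is exactly the condition for `p^A(a|b)` to be Frobenius. -/
def IsSinglePath (a b : List ℕ) : Prop :=
  (meander a b).IsAcyclic ∧
  (∀ i j, i ∈ Finset.Icc 1 a.sum → j ∈ Finset.Icc 1 a.sum → (meander a b).Reachable i j) ∧
  ∀ i j, ¬(blockPair a i j ∧ blockPair b i j)

/-- `i` and `j` lie in the same block of the composition `c`. -/
def sameBlock (c : List ℕ) (i j : ℕ) : Prop :=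
  ∃ k, k < c.length ∧ (c.take k).sum < i ∧ i ≤ (c.take k).sum + c.getD k 0 ∧
    (c.take k).sum < j ∧ j ≤ (c.take k).sum + c.getD k 0

/-- The matrix position `(i, j)` belongs to the seaweed `p^A(a|b)`. -/
def seaweedPos (a b : List ℕ) (i j : ℕ) : Prop :=
  (j ≤ i ∧ sameBlock a i j) ∨ (i ≤ j ∧ sameBlock b i j)

open scoped Classical in
/-- The block of the spectrum matrix of `p^A(a|b)` on rows `R` and columns `C`:
the multiset of weights `w(P_{i,j})` over positions `(i,j)` of the seaweed with
`i ∈ R`, `j ∈ C`. -/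
noncomputable def spectrumBlock (a b : List ℕ) (R C : Finset ℕ) : Multiset ℤ :=
  ((R ×ˢ C).filter fun p => seaweedPos a b p.1 p.2).val.map fun p => pathWeight a b p.1 p.2

/-- The multiset of all values of the extended spectrum matrix of `p^A(a|b)`:
the weights `w(P_{i,j})` over all pairs `1 ≤ i, j ≤ n`. -/
noncomputable def extendedValues (a b : List ℕ) : Multiset ℤ :=
  (Finset.Icc 1 a.sum ×ˢ Finset.Icc 1 a.sum).val.map fun p => pathWeight a b p.1 p.2

/-- The spectrum of a Frobenius type-A seaweed `p^A(a|b)`: the multiset of entries of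
its spectrum matrix, with one copy of `0` removed. -/
noncomputable def spectrum (a b : List ℕ) : Multiset ℤ :=
  spectrumBlock a b (Finset.Icc 1 a.sum) (Finset.Icc 1 a.sum) - {0}

/-- The extended spectrum: all entries of the extended spectrum matrix, with one copy
of `0` removed. -/
noncomputable def extendedSpectrum (a b : List ℕ) : Multiset ℤ :=
  extendedValues a b - {0}

/-- Listing the distinct values of the multiset `S` in increasing order, the
corresponding sequence of multiplicities is log-concave. -/
def HasLogConcaveSpectrum (S : Multiset ℤ) : Prop :=
  ∀ i : ℕ, 0 < i → i + 1 < (S.toFinset.sort (· ≤ ·)).length →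
    S.count ((S.toFinset.sort (· ≤ ·)).getD (i - 1) 0) *
      S.count ((S.toFinset.sort (· ≤ ·)).getD (i + 1) 0) ≤
      S.count ((S.toFinset.sort (· ≤ ·)).getD i 0) ^ 2



/-! ### Auxiliary development -/

/-- The potential function on the vertices of the meander of `(k+1, k | 2k+1)`. -/
def phi (k v : ℕ) : ℤ :=
  if v ≤ k + 1 then (if 2 * v < k + 2 then 2 * (v : ℤ) - 2 else 2 * (k : ℤ) + 1 - 2 * v)
  else (if 2 * v ≤ 3 * k + 2 then 2 * (v : ℤ) - 2 * k - 2 else 4 * (k : ℤ) + 3 - 2 * v)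

lemma blockPairA_iff (k x y : ℕ) :
    blockPair [k + 1, k] x y ↔
      (x + y = k + 2 ∧ 1 ≤ x ∧ 1 ≤ y ∧ x ≠ y) ∨
      (x + y = 3 * k + 3 ∧ k + 2 ≤ x ∧ k + 2 ≤ y ∧ x ≠ y) := by
  constructor
  · rintro ⟨m, hm, h1, h2, h3, h4⟩
    simp only [List.length_cons, List.length_nil] at hm
    interval_cases m <;> simp_all <;> omega
  · rintro (⟨h1, h2, h3, h4⟩ | ⟨h1, h2, h3, h4⟩)
    · exact ⟨0, by simp, by simpa, by simpa, by simp; omega, h4⟩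
    · exact ⟨1, by simp, by simp; omega, by simp; omega, by simp; omega, h4⟩

lemma blockPairB_iff (k x y : ℕ) :
    blockPair [2 * k + 1] x y ↔ (x + y = 2 * k + 2 ∧ 1 ≤ x ∧ 1 ≤ y ∧ x ≠ y) := by
  constructor
  · rintro ⟨m, hm, h1, h2, h3, h4⟩
    simp only [List.length_cons, List.length_nil] at hm
    interval_cases m <;> simp_all <;> omega
  · rintro ⟨h1, h2, h3, h4⟩
    exact ⟨0, by simp, by simpa, by simpa, by simp; omega, h4⟩

lemma meander_adj_iff (k x y : ℕ) :
    (meander [k + 1, k] [2 * k + 1]).Adj x y ↔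
      (x + y = k + 2 ∧ 1 ≤ x ∧ 1 ≤ y ∧ x ≠ y) ∨
      (x + y = 3 * k + 3 ∧ k + 2 ≤ x ∧ k + 2 ≤ y ∧ x ≠ y) ∨
      (x + y = 2 * k + 2 ∧ 1 ≤ x ∧ 1 ≤ y ∧ x ≠ y) := by
  show blockPair _ x y ∨ blockPair _ x y ↔ _
  rw [blockPairA_iff, blockPairB_iff]
  tauto

lemma weight_step {k : ℕ} (hk : 1 ≤ k) {x y : ℕ}
    (h : (meander [k + 1, k] [2 * k + 1]).Adj x y) :
    (dirEdge [k + 1, k] [2 * k + 1] x y → phi k y = phi k x + 1) ∧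
    (¬ dirEdge [k + 1, k] [2 * k + 1] x y → phi k y = phi k x - 1) := by
  rw [meander_adj_iff] at h
  have hd : dirEdge [k + 1, k] [2 * k + 1] x y ↔
      ((blockPair [k+1,k] x y) ∧ y < x) ∨ ((blockPair [2*k+1] x y) ∧ x < y) := Iff.rfl
  rw [blockPairA_iff, blockPairB_iff] at hd
  constructor
  · intro hdir
    rw [hd] at hdir
    unfold phi
    rcases hdir with (⟨(⟨h1,h2,h3,h4⟩|⟨h1,h2,h3,h4⟩), h5⟩ | ⟨⟨h1,h2,h3,h4⟩, h5⟩) <;>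
      split_ifs <;> omega
  · intro hdir
    rw [hd] at hdir
    push_neg at hdir
    obtain ⟨hd1, hd2⟩ := hdir
    unfold phi
    rcases h with (⟨h1,h2,h3,h4⟩|⟨h1,h2,h3,h4⟩|⟨h1,h2,h3,h4⟩)
    · have h5 : x < y := lt_of_le_of_ne (hd1 (Or.inl ⟨h1,h2,h3,h4⟩)) h4
      split_ifs <;> omega
    · have h5 : x < y := lt_of_le_of_ne (hd1 (Or.inr ⟨h1,h2,h3,h4⟩)) h4
      split_ifs <;> omega
    · have h5 : y < x := lt_of_le_of_ne (hd2 ⟨h1,h2,h3,h4⟩) (Ne.symm h4)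
      split_ifs <;> omega

lemma walkWeight_eq {k : ℕ} (hk : 1 ≤ k) {i j : ℕ}
    (w : (meander [k + 1, k] [2 * k + 1]).Walk i j) :
    walkWeight [k + 1, k] [2 * k + 1] w = phi k j - phi k i := by
  induction w with
  | nil => simp [walkWeight]
  | @cons a b c hadj p ih =>
    unfold walkWeight at ih ⊢
    rw [SimpleGraph.Walk.darts_cons, List.map_cons, List.sum_cons, ih]
    have := weight_step hk hadj
    by_cases hdir : dirEdge [k + 1, k] [2 * k + 1] a b
    · rw [if_pos hdir, this.1 hdir]; ring
    · rw [if_neg hdir, this.2 hdir]; ring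


/-- Distance-to-`k+1` measure along the meander path. -/
def psi (k v : ℕ) : ℕ :=
  if v ≤ k then min (4 * v - 3) (4 * (k + 1 - v))
  else if v = k + 1 then 0
  else min (4 * (2 * k + 1 - v) + 2) (4 * (v - (k + 2)) + 3)

lemma psi_step {k v : ℕ} (hk : 1 ≤ k) (hv1 : 1 ≤ v) (hv2 : v ≤ 2 * k + 1)
    (hne : v ≠ k + 1) :
    ∃ u, (meander [k + 1, k] [2 * k + 1]).Adj v u ∧ 1 ≤ u ∧ u ≤ 2 * k + 1 ∧
      psi k u < psi k v := by
  rcases Nat.lt_or_ge v (k + 1) with hb | hb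
  · -- v ≤ k
    rcases le_or_gt (8 * v) (4 * k + 7) with hc | hc
    · -- candidate A : u = k + 2 - v, top1 edge
      refine ⟨k + 2 - v, ?_, by omega, by omega, ?_⟩
      · rw [meander_adj_iff]; left; omega
      · unfold psi; split_ifs <;> omega
    · -- candidate B : u = 2k + 2 - v, bottom edge
      refine ⟨2 * k + 2 - v, ?_, by omega, by omega, ?_⟩
      · rw [meander_adj_iff]; right; right; omega
      · unfold psi; split_ifs <;> omega
  · -- v ≥ k + 2
    rcases le_or_gt (12 * k + 11) (8 * v) with hc | hc
    · -- candidate A : u = 2k + 2 - v, bottom edge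
      refine ⟨2 * k + 2 - v, ?_, by omega, by omega, ?_⟩
      · rw [meander_adj_iff]; right; right; omega
      · unfold psi; split_ifs <;> omega
    · -- candidate B : u = 3k + 3 - v, top2 edge
      refine ⟨3 * k + 3 - v, ?_, by omega, by omega, ?_⟩
      · rw [meander_adj_iff]; right; left; omega
      · unfold psi; split_ifs <;> omega

lemma reach_center {k : ℕ} (hk : 1 ≤ k) :
    ∀ n v, psi k v ≤ n → 1 ≤ v → v ≤ 2 * k + 1 →
      (meander [k + 1, k] [2 * k + 1]).Reachable v (k + 1) := by
  intro n
  induction n with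
  | zero =>
    intro v h h1 h2
    have : v = k + 1 := by unfold psi at h; split_ifs at h <;> omega
    exact this ▸ SimpleGraph.Reachable.refl _
  | succ n ih =>
    intro v h h1 h2
    by_cases hv : v = k + 1
    · exact hv ▸ SimpleGraph.Reachable.refl _
    · obtain ⟨u, hadj, hu1, hu2, hlt⟩ := psi_step hk h1 h2 hv
      exact (hadj.reachable).trans (ih u (by omega) hu1 hu2)

lemma meander_reachable {k : ℕ} (hk : 1 ≤ k) {i j : ℕ}
    (hi1 : 1 ≤ i) (hi2 : i ≤ 2 * k + 1) (hj1 : 1 ≤ j) (hj2 : j ≤ 2 * k + 1) :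
    (meander [k + 1, k] [2 * k + 1]).Reachable i j :=
  (reach_center hk (psi k i) i le_rfl hi1 hi2).trans
    (reach_center hk (psi k j) j le_rfl hj1 hj2).symm

lemma pathWeight_eq {k : ℕ} (hk : 1 ≤ k) {i j : ℕ}
    (hi1 : 1 ≤ i) (hi2 : i ≤ 2 * k + 1) (hj1 : 1 ≤ j) (hj2 : j ≤ 2 * k + 1) :
    pathWeight [k + 1, k] [2 * k + 1] i j = phi k j - phi k i := by
  obtain ⟨w⟩ := meander_reachable hk hi1 hi2 hj1 hj2
  have hex : ∃ p : (meander [k + 1, k] [2 * k + 1]).Walk i j, p.IsPath :=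
    ⟨w.toPath.1, w.toPath.2⟩
  rw [pathWeight, dif_pos hex]
  exact walkWeight_eq hk _


open scoped Classical

lemma phi_mem1 {k v : ℕ} (hk : 1 ≤ k) (h1 : 1 ≤ v) (h2 : v ≤ k + 1) :
    -1 ≤ phi k v ∧ phi k v ≤ (k : ℤ) - 1 := by
  unfold phi; split_ifs <;> omega

lemma phi_mem2 {k v : ℕ} (hk : 1 ≤ k) (h1 : k + 2 ≤ v) (h2 : v ≤ 2 * k + 1) :
    1 ≤ phi k v ∧ phi k v ≤ (k : ℤ) := by
  unfold phi; split_ifs <;> omega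

lemma phi_inj1 {k v w : ℕ} (hv1 : 1 ≤ v) (hv2 : v ≤ k + 1) (hw1 : 1 ≤ w)
    (hw2 : w ≤ k + 1) (h : phi k v = phi k w) : v = w := by
  unfold phi at h; split_ifs at h <;> omega

lemma phi_inj2 {k v w : ℕ} (hv1 : k + 2 ≤ v) (hv2 : v ≤ 2 * k + 1) (hw1 : k + 2 ≤ w)
    (hw2 : w ≤ 2 * k + 1) (h : phi k v = phi k w) : v = w := by
  unfold phi at h; split_ifs at h <;> omega

lemma phi_surj1 {k : ℕ} (hk : 1 ≤ k) {s : ℤ} (h1 : -1 ≤ s) (h2 : s ≤ (k : ℤ) - 1) :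
    ∃ v, 1 ≤ v ∧ v ≤ k + 1 ∧ phi k v = s := by
  obtain ⟨n, hn⟩ : ∃ n : ℕ, (n : ℤ) = s + 1 := ⟨(s + 1).toNat, Int.toNat_of_nonneg (by omega)⟩
  refine ⟨if n % 2 = 1 then (n + 1) / 2 else k + 1 - n / 2, ?_, ?_, ?_⟩
  · split_ifs <;> omega
  · split_ifs <;> omega
  · unfold phi; split_ifs <;> omega

lemma phi_surj2 {k : ℕ} (hk : 1 ≤ k) {s : ℤ} (h1 : 1 ≤ s) (h2 : s ≤ (k : ℤ)) :
    ∃ v, k + 2 ≤ v ∧ v ≤ 2 * k + 1 ∧ phi k v = s := by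
  obtain ⟨n, hn⟩ : ∃ n : ℕ, (n : ℤ) = s := ⟨s.toNat, Int.toNat_of_nonneg (by omega)⟩
  refine ⟨if n % 2 = 0 then k + 1 + n / 2 else 2 * k + 1 - (n - 1) / 2, ?_, ?_, ?_⟩
  · split_ifs <;> omega
  · split_ifs <;> omega
  · unfold phi; split_ifs <;> omega

lemma card_slice (a b c d z : ℤ) :
    ((Finset.Icc a b).filter (fun s => s + z ∈ Finset.Icc c d)).card
      = (min b (d - z) + 1 - max a (c - z)).toNat := by
  have h : (Finset.Icc a b).filter (fun s => s + z ∈ Finset.Icc c d)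
      = Finset.Icc (max a (c - z)) (min b (d - z)) := by
    ext x
    simp only [Finset.mem_filter, Finset.mem_Icc, max_le_iff, le_min_iff, le_max_iff,
      min_le_iff]
    omega
  rw [h, Int.card_Icc]

lemma card_pair_block (k : ℕ) (z : ℤ) (l1 h1 l2 h2 : ℕ) (a1 b1 a2 b2 : ℤ)
    (mem1 : ∀ v, l1 ≤ v → v ≤ h1 → a1 ≤ phi k v ∧ phi k v ≤ b1)
    (inj1 : ∀ v w, l1 ≤ v → v ≤ h1 → l1 ≤ w → w ≤ h1 → phi k v = phi k w → v = w)
    (surj1 : ∀ s : ℤ, a1 ≤ s → s ≤ b1 → ∃ v, l1 ≤ v ∧ v ≤ h1 ∧ phi k v = s)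
    (mem2 : ∀ v, l2 ≤ v → v ≤ h2 → a2 ≤ phi k v ∧ phi k v ≤ b2)
    (inj2 : ∀ v w, l2 ≤ v → v ≤ h2 → l2 ≤ w → w ≤ h2 → phi k v = phi k w → v = w)
    (surj2 : ∀ s : ℤ, a2 ≤ s → s ≤ b2 → ∃ v, l2 ≤ v ∧ v ≤ h2 ∧ phi k v = s) :
    ((Finset.Icc l1 h1 ×ˢ Finset.Icc l2 h2).filter
        (fun p => phi k p.2 - phi k p.1 = z)).card
      = (min b1 (b2 - z) + 1 - max a1 (a2 - z)).toNat := by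
  rw [← card_slice a1 b1 a2 b2 z]
  apply Finset.card_bij (fun p _ => phi k p.1)
  · rintro ⟨i, j⟩ hp
    simp only [Finset.mem_filter, Finset.mem_product, Finset.mem_Icc] at hp
    obtain ⟨⟨⟨hi1, hi2⟩, hj1, hj2⟩, hw⟩ := hp
    have m1 := mem1 i hi1 hi2
    have m2 := mem2 j hj1 hj2
    simp only [Finset.mem_filter, Finset.mem_Icc]
    constructor
    · exact ⟨m1.1, m1.2⟩
    · constructor <;> omega
  · rintro ⟨i, j⟩ hp ⟨i', j'⟩ hp' hij
    simp only [Finset.mem_filter, Finset.mem_product, Finset.mem_Icc] at hp hp'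
    obtain ⟨⟨⟨hi1, hi2⟩, hj1, hj2⟩, hw⟩ := hp
    obtain ⟨⟨⟨hi1', hi2'⟩, hj1', hj2'⟩, hw'⟩ := hp'
    simp only at hij
    have e1 : i = i' := inj1 i i' hi1 hi2 hi1' hi2' hij
    have e2 : j = j' := inj2 j j' hj1 hj2 hj1' hj2' (by omega)
    simp [e1, e2]
  · intro s hs
    simp only [Finset.mem_filter, Finset.mem_Icc] at hs
    obtain ⟨⟨hs1, hs2⟩, hs3, hs4⟩ := hs
    obtain ⟨v, hv1, hv2, hv3⟩ := surj1 s hs1 hs2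
    obtain ⟨w, hw1, hw2, hw3⟩ := surj2 (s + z) hs3 hs4
    refine ⟨⟨v, w⟩, ?_, by simp [hv3]⟩
    simp only [Finset.mem_filter, Finset.mem_product, Finset.mem_Icc]
    exact ⟨⟨⟨hv1, hv2⟩, hw1, hw2⟩, by omega⟩

lemma sameBlockA_iff (k x y : ℕ) :
    sameBlock [k + 1, k] x y ↔
      (1 ≤ x ∧ x ≤ k + 1 ∧ 1 ≤ y ∧ y ≤ k + 1) ∨
      (k + 2 ≤ x ∧ x ≤ 2 * k + 1 ∧ k + 2 ≤ y ∧ y ≤ 2 * k + 1) := by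
  constructor
  · rintro ⟨m, hm, h1, h2, h3, h4⟩
    simp only [List.length_cons, List.length_nil] at hm
    interval_cases m <;> simp_all <;> omega
  · rintro (⟨h1, h2, h3, h4⟩ | ⟨h1, h2, h3, h4⟩)
    · exact ⟨0, by simp, by simpa, by simp; omega, by simpa, by simp; omega⟩
    · exact ⟨1, by simp, by simp; omega, by simp; omega, by simp; omega, by simp; omega⟩

lemma sameBlockB_iff (k x y : ℕ) :
    sameBlock [2 * k + 1] x y ↔
      (1 ≤ x ∧ x ≤ 2 * k + 1 ∧ 1 ≤ y ∧ y ≤ 2 * k + 1) := by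
  constructor
  · rintro ⟨m, hm, h1, h2, h3, h4⟩
    simp only [List.length_cons, List.length_nil] at hm
    interval_cases m <;> simp_all <;> omega
  · rintro ⟨h1, h2, h3, h4⟩
    exact ⟨0, by simp, by simpa, by simp; omega, by simpa, by simp; omega⟩

lemma seaweedPos_iff {k x y : ℕ} (hx1 : 1 ≤ x) (hx2 : x ≤ 2 * k + 1)
    (hy1 : 1 ≤ y) (hy2 : y ≤ 2 * k + 1) :
    seaweedPos [k + 1, k] [2 * k + 1] x y ↔ ¬(k + 2 ≤ x ∧ y ≤ k + 1) := by
  unfold seaweedPos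
  rw [sameBlockA_iff, sameBlockB_iff]
  omega


lemma count_positions {k : ℕ} (hk : 1 ≤ k) (z : ℤ) :
    ((Finset.Icc 1 (2 * k + 1) ×ˢ Finset.Icc 1 (2 * k + 1)).filter
        (fun p => seaweedPos [k + 1, k] [2 * k + 1] p.1 p.2 ∧
          phi k p.2 - phi k p.1 = z)).card
      = (min ((k : ℤ) - 1) ((k : ℤ) - 1 - z) + 1 - max (-1) (-1 - z)).toNat
        + (min ((k : ℤ) - 1) ((k : ℤ) - z) + 1 - max (-1) (1 - z)).toNat
        + (min (k : ℤ) ((k : ℤ) - z) + 1 - max 1 (1 - z)).toNat := by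
  have hfe : (Finset.Icc 1 (2 * k + 1) ×ˢ Finset.Icc 1 (2 * k + 1)).filter
        (fun p => seaweedPos [k + 1, k] [2 * k + 1] p.1 p.2 ∧
          phi k p.2 - phi k p.1 = z)
      = (Finset.Icc 1 (2 * k + 1) ×ˢ Finset.Icc 1 (2 * k + 1)).filter
        (fun p => (p.1 ≤ k + 1 ∧ p.2 ≤ k + 1 ∧ phi k p.2 - phi k p.1 = z) ∨
          ((p.1 ≤ k + 1 ∧ k + 2 ≤ p.2 ∧ phi k p.2 - phi k p.1 = z) ∨
           (k + 2 ≤ p.1 ∧ k + 2 ≤ p.2 ∧ phi k p.2 - phi k p.1 = z))) := by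
    apply Finset.filter_congr
    rintro ⟨i, j⟩ hp
    simp only [Finset.mem_product, Finset.mem_Icc] at hp
    obtain ⟨⟨hi1, hi2⟩, hj1, hj2⟩ := hp
    rw [seaweedPos_iff hi1 hi2 hj1 hj2]
    constructor
    · rintro ⟨hreg, hw⟩
      have : (i ≤ k + 1 ∧ j ≤ k + 1) ∨ ((i ≤ k + 1 ∧ k + 2 ≤ j) ∨
          (k + 2 ≤ i ∧ k + 2 ≤ j)) := by omega
      tauto
    · rintro (⟨h1, h2, hw⟩ | ⟨h1, h2, hw⟩ | ⟨h1, h2, hw⟩) <;> exact ⟨by omega, hw⟩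
  rw [hfe, Finset.filter_or, Finset.filter_or,
    Finset.card_union_of_disjoint, Finset.card_union_of_disjoint]
  · have e1 : (Finset.Icc 1 (2 * k + 1) ×ˢ Finset.Icc 1 (2 * k + 1)).filter
        (fun p => p.1 ≤ k + 1 ∧ p.2 ≤ k + 1 ∧ phi k p.2 - phi k p.1 = z)
        = (Finset.Icc 1 (k + 1) ×ˢ Finset.Icc 1 (k + 1)).filter
          (fun p => phi k p.2 - phi k p.1 = z) := by
      ext ⟨i, j⟩
      simp only [Finset.mem_filter, Finset.mem_product, Finset.mem_Icc]
      constructor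
      · rintro ⟨⟨⟨a, b⟩, c, d⟩, e, f, g⟩; exact ⟨⟨⟨a, e⟩, c, f⟩, g⟩
      · rintro ⟨⟨⟨a, e⟩, c, f⟩, g⟩; exact ⟨⟨⟨a, by omega⟩, c, by omega⟩, e, f, g⟩
    have e2 : (Finset.Icc 1 (2 * k + 1) ×ˢ Finset.Icc 1 (2 * k + 1)).filter
        (fun p => p.1 ≤ k + 1 ∧ k + 2 ≤ p.2 ∧ phi k p.2 - phi k p.1 = z)
        = (Finset.Icc 1 (k + 1) ×ˢ Finset.Icc (k + 2) (2 * k + 1)).filter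
          (fun p => phi k p.2 - phi k p.1 = z) := by
      ext ⟨i, j⟩
      simp only [Finset.mem_filter, Finset.mem_product, Finset.mem_Icc]
      constructor
      · rintro ⟨⟨⟨a, b⟩, c, d⟩, e, f, g⟩; exact ⟨⟨⟨a, e⟩, f, d⟩, g⟩
      · rintro ⟨⟨⟨a, e⟩, f, d⟩, g⟩; exact ⟨⟨⟨a, by omega⟩, by omega, d⟩, e, f, g⟩
    have e3 : (Finset.Icc 1 (2 * k + 1) ×ˢ Finset.Icc 1 (2 * k + 1)).filter
        (fun p => k + 2 ≤ p.1 ∧ k + 2 ≤ p.2 ∧ phi k p.2 - phi k p.1 = z)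
        = (Finset.Icc (k + 2) (2 * k + 1) ×ˢ Finset.Icc (k + 2) (2 * k + 1)).filter
          (fun p => phi k p.2 - phi k p.1 = z) := by
      ext ⟨i, j⟩
      simp only [Finset.mem_filter, Finset.mem_product, Finset.mem_Icc]
      constructor
      · rintro ⟨⟨⟨a, b⟩, c, d⟩, e, f, g⟩; exact ⟨⟨⟨e, b⟩, f, d⟩, g⟩
      · rintro ⟨⟨⟨e, b⟩, f, d⟩, g⟩; exact ⟨⟨⟨by omega, b⟩, by omega, d⟩, e, f, g⟩
    rw [e1, e2, e3,
      card_pair_block k z 1 (k + 1) 1 (k + 1) (-1) ((k : ℤ) - 1) (-1) ((k : ℤ) - 1)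
        (fun v hv1 hv2 => phi_mem1 hk hv1 hv2)
        (fun v w a b c d h => phi_inj1 a b c d h)
        (fun s h1 h2 => phi_surj1 hk h1 h2)
        (fun v hv1 hv2 => phi_mem1 hk hv1 hv2)
        (fun v w a b c d h => phi_inj1 a b c d h)
        (fun s h1 h2 => phi_surj1 hk h1 h2),
      card_pair_block k z 1 (k + 1) (k + 2) (2 * k + 1) (-1) ((k : ℤ) - 1) 1 (k : ℤ)
        (fun v hv1 hv2 => phi_mem1 hk hv1 hv2)
        (fun v w a b c d h => phi_inj1 a b c d h)
        (fun s h1 h2 => phi_surj1 hk h1 h2)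
        (fun v hv1 hv2 => phi_mem2 hk hv1 hv2)
        (fun v w a b c d h => phi_inj2 a b c d h)
        (fun s h1 h2 => phi_surj2 hk h1 h2),
      card_pair_block k z (k + 2) (2 * k + 1) (k + 2) (2 * k + 1) 1 (k : ℤ) 1 (k : ℤ)
        (fun v hv1 hv2 => phi_mem2 hk hv1 hv2)
        (fun v w a b c d h => phi_inj2 a b c d h)
        (fun s h1 h2 => phi_surj2 hk h1 h2)
        (fun v hv1 hv2 => phi_mem2 hk hv1 hv2)
        (fun v w a b c d h => phi_inj2 a b c d h)
        (fun s h1 h2 => phi_surj2 hk h1 h2)]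
    omega
  · rw [Finset.disjoint_left]
    rintro ⟨i, j⟩ ha hb
    simp only [Finset.mem_filter] at ha hb
    obtain ⟨-, h1, -, -⟩ := ha
    obtain ⟨-, h3, -, -⟩ := hb
    omega
  · rw [Finset.disjoint_left]
    rintro ⟨i, j⟩ ha hb
    rw [Finset.mem_union] at hb
    simp only [Finset.mem_filter] at ha hb
    obtain ⟨-, -, h2, -⟩ := ha
    rcases hb with ⟨-, -, h3, -⟩ | ⟨-, -, h3, -⟩ <;> omega


/-- The multiplicity of `z` in the spectrum of `p^A(k+1|k / 2k+1)`. -/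
def NS (k : ℕ) (z : ℤ) : ℕ :=
  if z = -(k : ℤ) ∨ z = (k : ℤ) + 1 then 1
  else if z = 0 ∨ z = 1 then 3 * k - 1
  else if -(k : ℤ) < z ∧ z < 0 then 3 * (z + k).toNat
  else if 1 < z ∧ z < (k : ℤ) + 1 then 3 * ((k : ℤ) + 1 - z).toNat
  else 0

lemma sum_A_eq (k : ℕ) : [k + 1, k].sum = 2 * k + 1 := by simp; omega

lemma count_spectrum {k : ℕ} (hk : 1 ≤ k) (z : ℤ) :
    (spectrum [k + 1, k] [2 * k + 1]).count z = NS k z := by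
  unfold spectrum spectrumBlock
  rw [Multiset.count_sub, sum_A_eq]
  have hcong : (Finset.Icc 1 (2 * k + 1) ×ˢ Finset.Icc 1 (2 * k + 1)).filter
        (fun p => seaweedPos [k + 1, k] [2 * k + 1] p.1 p.2)
      = (Finset.Icc 1 (2 * k + 1) ×ˢ Finset.Icc 1 (2 * k + 1)).filter
        (fun p => seaweedPos [k + 1, k] [2 * k + 1] p.1 p.2) := rfl
  have hmap : ∀ p ∈ ((Finset.Icc 1 (2 * k + 1) ×ˢ Finset.Icc 1 (2 * k + 1)).filter
        (fun p => seaweedPos [k + 1, k] [2 * k + 1] p.1 p.2)).val,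
      pathWeight [k + 1, k] [2 * k + 1] p.1 p.2 = phi k p.2 - phi k p.1 := by
    rintro ⟨i, j⟩ hp
    have hp' : (i, j) ∈ ((Finset.Icc 1 (2 * k + 1) ×ˢ Finset.Icc 1 (2 * k + 1)).filter
        (fun p => seaweedPos [k + 1, k] [2 * k + 1] p.1 p.2)) := hp
    simp only [Finset.mem_filter, Finset.mem_product, Finset.mem_Icc] at hp'
    exact pathWeight_eq hk hp'.1.1.1 hp'.1.1.2 hp'.1.2.1 hp'.1.2.2
  rw [Multiset.map_congr rfl hmap, Multiset.count_map]
  have hcard : (Multiset.filter (fun p => z = phi k p.2 - phi k p.1)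
        ((Finset.Icc 1 (2 * k + 1) ×ˢ Finset.Icc 1 (2 * k + 1)).filter
          (fun p => seaweedPos [k + 1, k] [2 * k + 1] p.1 p.2)).val).card
      = ((Finset.Icc 1 (2 * k + 1) ×ˢ Finset.Icc 1 (2 * k + 1)).filter
          (fun p => seaweedPos [k + 1, k] [2 * k + 1] p.1 p.2 ∧
            phi k p.2 - phi k p.1 = z)).card := by
    rw [← Finset.filter_val, ← Finset.card_def, Finset.filter_filter]
    congr 1
    apply Finset.filter_congr
    intro p _
    constructor
    · rintro ⟨h1, h2⟩; exact ⟨h1, h2.symm⟩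
    · rintro ⟨h1, h2⟩; exact ⟨h1, h2.symm⟩
  rw [hcard, count_positions hk z]
  have h0 : ({0} : Multiset ℤ).count z = if z = 0 then 1 else 0 := by
    simp [Multiset.count_singleton]
  rw [h0]
  unfold NS
  split_ifs <;> omega

lemma sum_ite_low {k : ℕ} (hk : 1 ≤ k) (z : ℤ) :
    (∑ i ∈ Finset.Icc 1 (k - 1), if (i : ℤ) - k = z then 3 * i else 0)
      = if -(k : ℤ) < z ∧ z < 0 then 3 * (z + k).toNat else 0 := by
  by_cases h : -(k : ℤ) < z ∧ z < 0
  · rw [if_pos h]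
    have hi₀ : (z + k).toNat ∈ Finset.Icc 1 (k - 1) := by
      rw [Finset.mem_Icc]; omega
    rw [Finset.sum_eq_single ((z + k).toNat)]
    · rw [if_pos (by omega)]
    · intro i hi hne
      rw [Finset.mem_Icc] at hi
      rw [if_neg (by omega)]
    · intro h'; exact absurd hi₀ h'
  · rw [if_neg h]
    apply Finset.sum_eq_zero
    intro i hi
    rw [Finset.mem_Icc] at hi
    rw [if_neg (by omega)]

lemma sum_ite_high {k : ℕ} (hk : 1 ≤ k) (z : ℤ) :
    (∑ i ∈ Finset.Icc 1 (k - 1), if (k : ℤ) - i + 1 = z then 3 * i else 0)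
      = if 1 < z ∧ z < (k : ℤ) + 1 then 3 * ((k : ℤ) + 1 - z).toNat else 0 := by
  by_cases h : 1 < z ∧ z < (k : ℤ) + 1
  · rw [if_pos h]
    have hi₀ : ((k : ℤ) + 1 - z).toNat ∈ Finset.Icc 1 (k - 1) := by
      rw [Finset.mem_Icc]; omega
    rw [Finset.sum_eq_single (((k : ℤ) + 1 - z).toNat)]
    · rw [if_pos (by omega)]
    · intro i hi hne
      rw [Finset.mem_Icc] at hi
      rw [if_neg (by omega)]
    · intro h'; exact absurd hi₀ h'
  · rw [if_neg h]
    apply Finset.sum_eq_zero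
    intro i hi
    rw [Finset.mem_Icc] at hi
    rw [if_neg (by omega)]

lemma count_rhs {k : ℕ} (hk : 1 ≤ k) (z : ℤ) :
    (Multiset.replicate 1 (-(k : ℤ)) + Multiset.replicate (3 * k - 1) (0 : ℤ) +
        Multiset.replicate (3 * k - 1) (1 : ℤ) + Multiset.replicate 1 ((k : ℤ) + 1) +
        ∑ i ∈ Finset.Icc 1 (k - 1),
          (Multiset.replicate (3 * i) ((i : ℤ) - k) +
            Multiset.replicate (3 * i) ((k : ℤ) - i + 1))).count z = NS k z := by
  rw [Multiset.count_add, Multiset.count_add, Multiset.count_add, Multiset.count_add,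
    Multiset.count_sum']
  simp only [Multiset.count_replicate, Multiset.count_add]
  rw [Finset.sum_add_distrib, sum_ite_low hk z, sum_ite_high hk z]
  unfold NS
  split_ifs <;> omega

lemma spectrum_eq {k : ℕ} (hk : 1 ≤ k) :
    spectrum [k + 1, k] [2 * k + 1]
      = Multiset.replicate 1 (-(k : ℤ)) + Multiset.replicate (3 * k - 1) (0 : ℤ) +
        Multiset.replicate (3 * k - 1) (1 : ℤ) + Multiset.replicate 1 ((k : ℤ) + 1) +
        ∑ i ∈ Finset.Icc 1 (k - 1),
          (Multiset.replicate (3 * i) ((i : ℤ) - k) +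
            Multiset.replicate (3 * i) ((k : ℤ) - i + 1)) :=
  Multiset.ext.mpr fun z => (count_spectrum hk z).trans (count_rhs hk z).symm


lemma NS_logconcave {k : ℕ} (hk : 1 ≤ k) (z : ℤ) :
    NS k (z - 1) * NS k (z + 1) ≤ NS k z ^ 2 := by
  rcases le_or_gt z (-(k : ℤ)) with h | h
  · have h0 : NS k (z - 1) = 0 := by unfold NS; split_ifs <;> omega
    simp [h0]
  rcases le_or_gt ((k : ℤ) + 1) z with h2 | h2
  · have h0 : NS k (z + 1) = 0 := by unfold NS; split_ifs <;> omega
    simp [h0]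
  rcases lt_trichotomy z 0 with hz | hz | hz
  · -- -k < z < 0
    have hNz : NS k z = 3 * (z + k).toNat := by unfold NS; split_ifs <;> omega
    have ha : 1 ≤ (z + k).toNat := by omega
    have hN1 : NS k (z + 1) ≤ 3 * (z + k).toNat + 3 := by unfold NS; split_ifs <;> omega
    have hN0 : NS k (z - 1) ≤ 3 * (z + k).toNat - 3 ∨
        (NS k (z - 1) = 1 ∧ (z + k).toNat = 1) := by
      unfold NS; split_ifs <;> omega
    rcases hN0 with h0 | ⟨h0, h0'⟩
    · calc NS k (z - 1) * NS k (z + 1)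
          ≤ (3 * (z + k).toNat - 3) * (3 * (z + k).toNat + 3) := Nat.mul_le_mul h0 hN1
        _ ≤ (3 * (z + k).toNat) ^ 2 := by
            have h3 : 3 ≤ 3 * (z + k).toNat := by omega
            zify [h3]
            nlinarith [sq_nonneg ((3 : ℤ) * (z + k).toNat)]
        _ = NS k z ^ 2 := by rw [hNz]
    · have : NS k (z + 1) ≤ 6 := by omega
      calc NS k (z - 1) * NS k (z + 1) ≤ 1 * 6 := Nat.mul_le_mul (le_of_eq h0) this
        _ ≤ NS k z ^ 2 := by rw [hNz, h0']; norm_num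
  · subst hz
    have h1 : NS k (0 - 1) ≤ 3 * k - 1 := by unfold NS; split_ifs <;> omega
    have h2' : NS k (0 + 1) = 3 * k - 1 := by unfold NS; split_ifs <;> omega
    have h3 : NS k 0 = 3 * k - 1 := by unfold NS; split_ifs <;> omega
    rw [h2', h3, pow_two]
    exact Nat.mul_le_mul h1 le_rfl
  · rcases eq_or_lt_of_le (by omega : (1 : ℤ) ≤ z) with hz1 | hz1
    · subst hz1
      have h0 : NS k (1 - 1) = 3 * k - 1 := by unfold NS; split_ifs <;> omega
      have h1 : NS k 1 = 3 * k - 1 := by unfold NS; split_ifs <;> omega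
      have h2' : NS k (1 + 1) ≤ 3 * k - 1 := by unfold NS; split_ifs <;> omega
      rw [h0, h1, pow_two]
      exact Nat.mul_le_mul le_rfl h2' 
    · -- 1 < z < k+1
      have hNz : NS k z = 3 * ((k : ℤ) + 1 - z).toNat := by unfold NS; split_ifs <;> omega
      have ha : 1 ≤ ((k : ℤ) + 1 - z).toNat := by omega
      have hN0 : NS k (z - 1) ≤ 3 * ((k : ℤ) + 1 - z).toNat + 3 := by
        unfold NS; split_ifs <;> omega
      have hN1 : NS k (z + 1) ≤ 3 * ((k : ℤ) + 1 - z).toNat - 3 ∨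
          (NS k (z + 1) = 1 ∧ ((k : ℤ) + 1 - z).toNat = 1) := by
        unfold NS; split_ifs <;> omega
      rcases hN1 with h0 | ⟨h0, h0'⟩
      · calc NS k (z - 1) * NS k (z + 1)
            ≤ (3 * ((k : ℤ) + 1 - z).toNat + 3) * (3 * ((k : ℤ) + 1 - z).toNat - 3) :=
              Nat.mul_le_mul hN0 h0
          _ ≤ (3 * ((k : ℤ) + 1 - z).toNat) ^ 2 := by
              have h3 : 3 ≤ 3 * ((k : ℤ) + 1 - z).toNat := by omega
              zify [h3]
              nlinarith [sq_nonneg ((3 : ℤ) * ((k : ℤ) + 1 - z).toNat)]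
          _ = NS k z ^ 2 := by rw [hNz]
      · have h6 : NS k (z - 1) ≤ 6 := by omega
        calc NS k (z - 1) * NS k (z + 1) ≤ 6 * 1 := Nat.mul_le_mul h6 (le_of_eq h0)
          _ ≤ NS k z ^ 2 := by rw [hNz, h0']; norm_num

lemma spectrum_toFinset {k : ℕ} (hk : 1 ≤ k) :
    (spectrum [k + 1, k] [2 * k + 1]).toFinset = Finset.Icc (-(k : ℤ)) ((k : ℤ) + 1) := by
  ext z
  rw [Multiset.mem_toFinset, ← Multiset.count_pos, count_spectrum hk, Finset.mem_Icc]
  unfold NS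
  split_ifs <;> omega

lemma sort_Icc_int (a b : ℤ) :
    (Finset.Icc a b).sort (· ≤ ·) = (List.range (b + 1 - a).toNat).map (fun i : ℕ => a + (i : ℤ)) := by
  have hp : ((Finset.Icc a b).sort (· ≤ ·)).Perm
      ((List.range (b + 1 - a).toNat).map (fun i : ℕ => a + (i : ℤ))) := by
    apply List.perm_of_nodup_nodup_toFinset_eq (Finset.sort_nodup _ _)
    · refine List.Nodup.map ?_ List.nodup_range
      intro i j hij
      simp only at hij
      omega
    · rw [Finset.sort_toFinset]
      ext z
      simp only [List.mem_toFinset, List.mem_map, List.mem_range, Finset.mem_Icc]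
      constructor
      · intro hz; exact ⟨(z - a).toNat, by omega, by omega⟩
      · rintro ⟨i, hi, hz⟩; omega
  have hs2 : List.Pairwise (· ≤ ·) ((List.range (b + 1 - a).toNat).map fun i : ℕ => a + (i : ℤ)) := by
    rw [List.pairwise_map]
    exact (List.pairwise_lt_range).imp (fun h => by omega)
  exact List.Perm.eq_of_pairwise' (Finset.pairwise_sort _ _) hs2 hp

lemma getD_map_range {n i : ℕ} (f : ℕ → ℤ) (h : i < n) :
    (((List.range n).map f).getD i 0) = f i := by
  rw [List.getD_eq_getElem _ _ (by simpa using h)]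
  simp

/-- For `k ≥ 1`, the spectrum of the Frobenius type-A seaweed `p^A(k+1|k / 2k+1)`:
it is `{-1, 0^2, 1^2, 2}` for `k = 1` and
`{-k, 0^{3k-1}, 1^{3k-1}, k+1} ∪ ⋃_{i=1}^{k-1} {(-k+i)^{3i}, (k-i+1)^{3i}}` for `k > 1`;
moreover the seaweed has the log-concave spectrum property. -/
theorem statement11 (k : ℕ) (hk : 1 ≤ k) :
    (k = 1 →
      spectrum [k + 1, k] [2 * k + 1]
        = Multiset.replicate 1 (-1 : ℤ) + Multiset.replicate 2 (0 : ℤ) +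
          Multiset.replicate 2 (1 : ℤ) + Multiset.replicate 1 (2 : ℤ)) ∧
    (1 < k →
      spectrum [k + 1, k] [2 * k + 1]
        = Multiset.replicate 1 (-(k : ℤ)) + Multiset.replicate (3 * k - 1) (0 : ℤ) +
          Multiset.replicate (3 * k - 1) (1 : ℤ) + Multiset.replicate 1 ((k : ℤ) + 1) +
          ∑ i ∈ Finset.Icc 1 (k - 1),
            (Multiset.replicate (3 * i) ((i : ℤ) - k) +
              Multiset.replicate (3 * i) ((k : ℤ) - i + 1))) ∧
    HasLogConcaveSpectrum (spectrum [k + 1, k] [2 * k + 1]) := by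
  refine ⟨?_, ?_, ?_⟩
  · intro h1
    subst h1
    refine Multiset.ext.mpr fun z => ?_
    rw [count_spectrum le_rfl]
    simp only [Multiset.count_add, Multiset.count_replicate]
    unfold NS
    split_ifs <;> omega
  · intro _
    exact spectrum_eq hk
  · unfold HasLogConcaveSpectrum
    intro i hi0 hilen
    have hTF := spectrum_toFinset hk
    have h2 : ((k : ℤ) + 1 + 1 - -(k : ℤ)).toNat = 2 * k + 2 := by omega
    have hsort : (spectrum [k + 1, k] [2 * k + 1]).toFinset.sort (· ≤ ·)
        = (List.range (2 * k + 2)).map (fun i : ℕ => -(k : ℤ) + (i : ℤ)) := by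
      rw [hTF, sort_Icc_int, h2]
    rw [hsort] at hilen ⊢
    rw [List.length_map, List.length_range] at hilen
    rw [getD_map_range _ (by omega), getD_map_range _ (by omega),
      getD_map_range _ (by omega)]
    rw [count_spectrum hk, count_spectrum hk, count_spectrum hk]
    have e1 : -(k : ℤ) + ((i - 1 : ℕ) : ℤ) = -(k : ℤ) + (i : ℤ) - 1 := by omega
    have e2 : -(k : ℤ) + ((i + 1 : ℕ) : ℤ) = -(k : ℤ) + (i : ℤ) + 1 := by push_cast; ring
    rw [e1, e2]
    exact NS_logconcave hk _

end Seaweed
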